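/- Let d ≥ 1 be an integer. For every integer q ≥ 1, every N ∈ ℤ and every n ∈ ℤ^d, the normalized Kloosterman sum satisfies |K(q,N;n)| ≤ 2^{d/2}·q^{1−d/2}. -/

import Mathlib

open scoped ENNReal NNReal BigOperators
open MeasureTheory

noncomputable section

/-- `e(t) = exp(2πit)`. -/
def eC (t : ℝ) : ℂ := Complex.exp (2 * Real.pi * Complex.I * t)

/-- `|x|²` for `x ∈ ℤ^d`. -/
def normSqZ {d : ℕ} (x : Fin d → ℤ) : ℤ := ∑ i, (x i) ^ 2

/-- The natural number `r²` of an admissible radius `r`. -/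
def radSq (r : ℝ) : ℕ := ⌊r ^ 2⌋₊

/-- `r` is an admissible radius: `r > 0` and `r² ∈ ℕ`. -/
def IsAdmissible (r : ℝ) : Prop := 0 < r ∧ ∃ n : ℕ, r ^ 2 = (n : ℝ)

/-- A set of positive reals is lacunary. -/
def Lacunary (R : Set ℝ) : Prop := ∃ c : ℝ, 1 < c ∧ ∀ r ∈ R, ∀ s ∈ R, r < s → c * r ≤ s

/-- `N_d(r)`: the number of lattice points on the sphere of radius `r` in `ℤ^d`. -/
def sphereCount (d : ℕ) (r : ℝ) : ℕ := Nat.card {x : Fin d → ℤ // normSqZ x = (radSq r : ℤ)}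

/-- The discrete spherical average `A_r f`. -/
def sphAvg (d : ℕ) (r : ℝ) (f : (Fin d → ℤ) → ℂ) (x : Fin d → ℤ) : ℂ :=
  (sphereCount d r : ℂ)⁻¹ *
    ∑' y : Fin d → ℤ, if normSqZ y = (radSq r : ℤ) then f (x - y) else 0

/-- The `ℓ^p(ℤ^d)` norm, valued in `ℝ≥0∞`. -/
def lpNorm (d : ℕ) (p : ℝ) (f : (Fin d → ℤ) → ℂ) : ℝ≥0∞ :=
  (∑' x : Fin d → ℤ, (‖f x‖₊ : ℝ≥0∞) ^ p) ^ (1 / p)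

/-- `(G, B)` is an admissible good/bad prime dichotomy for the set of radii `R`,
with parameter `s`. -/
def GoodBadDichotomy (R : Set ℝ) (G B : Set ℕ) (s : ℝ) : Prop :=
  (∀ p : ℕ, p.Prime → p ∈ G ∪ B) ∧
  (∀ p ∈ G, Nat.Prime p) ∧
  (∀ p ∈ B, Nat.Prime p) ∧
  (∀ p ∈ G, ∀ r ∈ R, IsUnit ((radSq r : ZMod p))) ∧
  (∀ ε : ℝ, 0 < ε → ∃ C : ℝ, 0 < C ∧ ∀ p ∈ G,
    (({z : ZMod p | ∃ r ∈ R, z = (radSq r : ZMod p)}.ncard : ℝ)) ≤ C * (p : ℝ) ^ ε) ∧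
  Summable (fun q : B => (q : ℝ) ^ (-s))

/-- `∏_{i ≤ T} p_i`, the product of the first `⌊T⌋` primes. -/
def primorialUpTo (T : ℝ) : ℕ := ∏ i ∈ Finset.range ⌊T⌋₊, Nat.nth Nat.Prime i

/-- `∏_{j₀ ≤ i ≤ T} p_i` where `p_i` is the `i`-th prime (`1`-indexed). -/
def prodPrimesFrom (j₀ : ℕ) (T : ℝ) : ℕ :=
  ∏ i ∈ Finset.Icc j₀ ⌊T⌋₊, Nat.nth Nat.Prime (i - 1)

/-- `n_j = 1 + ∏_{i ≤ 2^{j^η}} p_i`. -/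
def nseq (η : ℝ) (j : ℕ) : ℕ := 1 + primorialUpTo ((2 : ℝ) ^ ((j : ℝ) ^ η))

/-- The normalized Kloosterman sum `K(q, N; n)`. -/
def kloosterman (d q : ℕ) (N : ℤ) (n : Fin d → ℤ) : ℂ :=
  ((q : ℂ)⁻¹) ^ d *
    ∑ u : Fin q,
      if Nat.Coprime (u : ℕ) q then
        eC (-(((u : ℕ) : ℝ) * (N : ℝ)) / q) *
          ∑ b : Fin d → Fin q,
            eC ((((u : ℕ) : ℝ) * ∑ i, (((b i : ℕ) : ℝ)) ^ 2
                + ∑ i, ((b i : ℕ) : ℝ) * ((n i : ℝ))) / q)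
      else 0

/-- The Ramanujan sum `c_q(N)`. -/
def ramanujanSum (q : ℕ) (N : ℤ) : ℂ :=
  ∑ u : Fin q, if Nat.Coprime (u : ℕ) q then eC ((((u : ℕ) : ℝ) * (N : ℝ)) / q) else 0

/-- The measure `dσ_r = (2 r^{d-1})⁻¹ ℋ^{d-1} ⌞ {|x| = r}` on `ℝ^d`. -/
def sphMeasure (d : ℕ) (r : ℝ) : Measure (EuclideanSpace ℝ (Fin d)) :=
  (ENNReal.ofReal (2 * r ^ (d - 1)))⁻¹ •
    (μH[((d : ℝ) - 1)] : Measure (EuclideanSpace ℝ (Fin d))).restrict (Metric.sphere 0 r)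

/-- The Fourier transform `𝓕dσ_r(ξ) = ∫ e(x·ξ) dσ_r(x)`. -/
def fourierSphMeasure (d : ℕ) (r : ℝ) (ξ : Fin d → ℝ) : ℂ :=
  ∫ x : EuclideanSpace ℝ (Fin d), eC (∑ i, x i * ξ i) ∂(sphMeasure d r)

/-- `Ψ` is a smooth bump: supported in `[-1/4,1/4]^d` and `1` on `[-1/8,1/8]^d`. -/
def IsBump (d : ℕ) (Ψ : (Fin d → ℝ) → ℝ) : Prop :=
  ContDiff ℝ (⊤ : ℕ∞) Ψ ∧
  (∀ x, x ∉ Set.Icc (fun _ => -(1/4 : ℝ)) (fun _ => (1/4 : ℝ)) → Ψ x = 0) ∧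
  (∀ x ∈ Set.Icc (fun _ => -(1/8 : ℝ)) (fun _ => (1/8 : ℝ)), Ψ x = 1)

/-- `Ψ'` is a smooth cutoff with `1_{[-1/4,1/4]^d} ≤ Ψ' ≤ 1_{[-1/2,1/2]^d}`. -/
def IsCutoff (d : ℕ) (Ψ' : (Fin d → ℝ) → ℝ) : Prop :=
  ContDiff ℝ (⊤ : ℕ∞) Ψ' ∧
  (∀ x, Set.indicator (Set.Icc (fun _ => -(1/4 : ℝ)) (fun _ => (1/4 : ℝ)))
      (fun _ => (1 : ℝ)) x ≤ Ψ' x) ∧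
  (∀ x, Ψ' x ≤ Set.indicator (Set.Icc (fun _ => -(1/2 : ℝ)) (fun _ => (1/2 : ℝ)))
      (fun _ => (1 : ℝ)) x)

/-- The Fourier transform of `f : ℤ^d → ℂ`, `f̂(ξ) = ∑_n f(n) e(n·ξ)`. -/
def ftZ {d : ℕ} (f : (Fin d → ℤ) → ℂ) (ξ : Fin d → ℝ) : ℂ :=
  ∑' n : Fin d → ℤ, f n * eC (∑ i, (n i : ℝ) * ξ i)

/-- The Fourier multiplier operator on `ℤ^d` with 1-periodic multiplier `m`. -/
def mulOp (d : ℕ) (m : (Fin d → ℝ) → ℂ) (f : (Fin d → ℤ) → ℂ) (x : Fin d → ℤ) : ℂ :=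
  ∫ ξ in Set.Icc (0 : Fin d → ℝ) 1, m ξ * ftZ f ξ * eC (-∑ i, (x i : ℝ) * ξ i)

/-- The multiplier of `H^q_r`. -/
def mHqr (d q : ℕ) (r : ℝ) (Ψ : (Fin d → ℝ) → ℝ) (ξ : Fin d → ℝ) : ℂ :=
  ∑' n : Fin d → ℤ,
    kloosterman d q ((radSq r : ℤ)) n * ((Ψ (fun i => (q : ℝ) * ξ i - (n i : ℝ)) : ℝ) : ℂ) *
      fourierSphMeasure d r (fun i => ξ i - (n i : ℝ) / q)

/-- The multiplier of `U^{1,q}_r` for `q = q₁q₂`. -/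
def mU1 (d q₁ q₂ : ℕ) (r : ℝ) (Ψ' : (Fin d → ℝ) → ℝ) (ξ : Fin d → ℝ) : ℂ :=
  ∑' n : Fin d → ℤ,
    kloosterman d q₁ ((radSq r : ℤ)) n *
      ((Ψ' (fun i => ((q₁ * q₂ : ℕ) : ℝ) * ξ i - (n i : ℝ)) : ℝ) : ℂ)

/-- The `ℓ^p(ℤ^d) → ℓ^p(ℤ^d)` operator norm (as a supremum over finitely supported
functions in the unit ball). -/
def opNormLp (d : ℕ) (p : ℝ) (T : ((Fin d → ℤ) → ℂ) → ((Fin d → ℤ) → ℂ)) : ℝ≥0∞ :=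
  ⨆ f : {f : (Fin d → ℤ) → ℂ // (Function.support f).Finite ∧ lpNorm d p f ≤ 1},
    lpNorm d p (T f.1)

/-- `𝓕Ψ_q(ζ) = ∫_{ℝ^d} Ψ(qy) e(y·ζ) dy`. -/
def ftPsiQ (d q : ℕ) (Ψ : (Fin d → ℝ) → ℝ) (ζ : Fin d → ℝ) : ℂ :=
  ∫ y : Fin d → ℝ, ((Ψ (fun i => (q : ℝ) * y i) : ℝ) : ℂ) * eC (∑ i, y i * ζ i)

/-- The kernel `K^q_r(x) = c_q(r² - |x|²) · ((𝓕Ψ_q) * dσ_r)(x)`. -/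
def kernelK (d q : ℕ) (r : ℝ) (Ψ : (Fin d → ℝ) → ℝ) (x : Fin d → ℤ) : ℂ :=
  ramanujanSum q ((radSq r : ℤ) - normSqZ x) *
    ∫ y : EuclideanSpace ℝ (Fin d), ftPsiQ d q Ψ (fun i => ((x i : ℝ)) - y i) ∂(sphMeasure d r)

/-- Discrete convolution on `ℤ^d`. -/
def dconv {d : ℕ} (f g : (Fin d → ℤ) → ℂ) (x : Fin d → ℤ) : ℂ :=
  ∑' y : Fin d → ℤ, f y * g (x - y)

/-- `Ã_r f = f * σ_r` with `σ_r = r^{2-d} 1_{sphere}`. -/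
def tildeAvg (d : ℕ) (r : ℝ) (f : (Fin d → ℤ) → ℂ) (x : Fin d → ℤ) : ℂ :=
  (r : ℂ) ^ ((2 : ℤ) - (d : ℤ)) *
    ∑' y : Fin d → ℤ, if normSqZ y = (radSq r : ℤ) then f (x - y) else 0

/-- The error operator `E_r f = Ã_r f - ∑_{1 ≤ q ≤ r} C^q_r f`. -/
def errOp (d : ℕ) (r : ℝ) (Ψ : (Fin d → ℝ) → ℝ) (f : (Fin d → ℤ) → ℂ) (x : Fin d → ℤ) : ℂ :=
  tildeAvg d r f x - ∑ q ∈ Finset.Icc 1 ⌊r⌋₊, dconv f (kernelK d q r Ψ) x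

/-- The Euclidean norm `|x|` of `x ∈ ℤ^d`. -/
def euclNormZ {d : ℕ} (x : Fin d → ℤ) : ℝ := Real.sqrt (∑ i, ((x i : ℝ)) ^ 2)


lemma eC_add (s t : ℝ) : eC (s + t) = eC s * eC t := by
  rw [eC, eC, eC, ← Complex.exp_add]
  congr 1
  push_cast
  ring

lemma abs_eC (t : ℝ) : ‖eC t‖ = 1 := by
  have h : (2 * (Real.pi : ℂ) * Complex.I * (t : ℂ)).re = 0 := by simp
  rw [eC, Complex.norm_exp, h, Real.exp_zero]

lemma conj_eC (t : ℝ) : (starRingEnd ℂ) (eC t) = eC (-t) := by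
  rw [eC, eC, ← Complex.exp_conj]
  congr 1
  simp only [map_mul, Complex.conj_I, Complex.conj_ofReal, map_ofNat]
  push_cast
  ring

lemma eC_int (k : ℤ) : eC k = 1 := by
  rw [eC, show (2 * (Real.pi : ℂ) * Complex.I * ((k : ℝ) : ℂ))
      = (k : ℂ) * (2 * Real.pi * Complex.I) by push_cast; ring]
  exact Complex.exp_int_mul_two_pi_mul_I k

lemma eC_eq_one {t : ℝ} (h : eC t = 1) : ∃ k : ℤ, t = k := by
  rw [eC, Complex.exp_eq_one_iff] at h
  obtain ⟨n, hn⟩ := h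
  refine ⟨n, ?_⟩
  have h2 : (2 * (Real.pi : ℂ) * Complex.I) ≠ 0 := by
    simp [Real.pi_ne_zero, Complex.I_ne_zero]
  have h3 : (2 * (Real.pi : ℂ) * Complex.I) * (t : ℂ)
      = (2 * (Real.pi : ℂ) * Complex.I) * (n : ℂ) := by linear_combination hn
  have := mul_left_cancel₀ h2 h3
  exact_mod_cast this

lemma eC_sum {ι : Type*} (s : Finset ι) (f : ι → ℝ) :
    eC (∑ i ∈ s, f i) = ∏ i ∈ s, eC (f i) := by
  classical
  induction s using Finset.induction with
  | empty => simp [eC]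
  | insert _ _ h ih => rw [Finset.sum_insert h, Finset.prod_insert h, eC_add, ih]

lemma sum_eC_range (q : ℕ) (hq : 0 < q) (m : ℤ) :
    ∑ c ∈ Finset.range q, eC ((m : ℝ) * (c : ℝ) / q) = if (q : ℤ) ∣ m then (q : ℂ) else 0 := by
  have hq0 : (q : ℝ) ≠ 0 := Nat.cast_ne_zero.mpr hq.ne'
  have hterm : ∀ c : ℕ, eC ((m : ℝ) * (c : ℝ) / q) = (eC ((m : ℝ) / q)) ^ c := by
    intro c
    rw [eC, eC, ← Complex.exp_nat_mul]
    congr 1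
    push_cast
    ring
  simp only [hterm]
  have hzq : eC ((m : ℝ) / q) ^ q = 1 := by
    rw [← hterm q]
    have : (m : ℝ) * (q : ℝ) / q = ((m : ℤ) : ℝ) := by field_simp
    rw [this, eC_int]
  by_cases h : (q : ℤ) ∣ m
  · have h1 : eC ((m : ℝ) / q) = 1 := by
      obtain ⟨k, hk⟩ := h
      have : (m : ℝ) / q = ((k : ℤ) : ℝ) := by rw [hk]; push_cast; field_simp
      rw [this, eC_int]
    rw [if_pos h]
    simp [h1]
  · have hne : eC ((m : ℝ) / q) ≠ 1 := by
      intro h1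
      obtain ⟨k, hk⟩ := eC_eq_one h1
      apply h
      refine ⟨k, ?_⟩
      have : (m : ℝ) = (q : ℝ) * (k : ℝ) := by
        field_simp at hk
        linarith
      exact_mod_cast this
    rw [geom_sum_eq hne, hzq, if_neg h]
    simp

def Fq (u q : ℕ) (n : ℤ) (a : ℤ) : ℂ :=
  eC (((u : ℝ) * (a : ℝ) ^ 2 + (a : ℝ) * (n : ℝ)) / q)

lemma Fq_periodic (u q : ℕ) (hq : 0 < q) (n : ℤ) {a b : ℤ} (h : (q : ℤ) ∣ a - b) :
    Fq u q n a = Fq u q n b := by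
  have hq0 : (q : ℝ) ≠ 0 := Nat.cast_ne_zero.mpr hq.ne'
  obtain ⟨c, hc⟩ := h
  have ha : (a : ℝ) = (b : ℝ) + (q : ℝ) * (c : ℝ) := by
    have : a = b + q * c := by linarith [hc]
    exact_mod_cast this
  have key : ((u : ℝ) * (a : ℝ) ^ 2 + (a : ℝ) * (n : ℝ)) / q
      = ((u : ℝ) * (b : ℝ) ^ 2 + (b : ℝ) * (n : ℝ)) / q
        + ((u * c * (2 * b + q * c) + c * n : ℤ) : ℝ) := by
    rw [ha]; push_cast; field_simp; ring
  rw [Fq, Fq, key, eC_add, eC_int, mul_one]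

lemma Fq_mul_conj (u q : ℕ) (hq : 0 < q) (n : ℤ) (y h : ℤ) :
    Fq u q n (y + h) * (starRingEnd ℂ) (Fq u q n y)
      = Fq u q n h * eC (((2 * u * h : ℤ) : ℝ) * (y : ℝ) / q) := by
  have hq0 : (q : ℝ) ≠ 0 := Nat.cast_ne_zero.mpr hq.ne'
  rw [Fq, Fq, Fq, conj_eC, ← eC_add, ← eC_add]
  congr 1
  push_cast
  field_simp
  ring

lemma sum_zmod_val (q : ℕ) [NeZero q] (g : ℕ → ℂ) :
    ∑ w : ZMod q, g w.val = ∑ i ∈ Finset.range q, g i := by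
  refine Finset.sum_nbij' (fun w => w.val) (fun i => (i : ZMod q)) ?_ ?_ ?_ ?_ ?_
  · intro a _; exact Finset.mem_range.mpr a.val_lt
  · intro a _; exact Finset.mem_univ _
  · intro a _; exact ZMod.natCast_zmod_val a
  · intro a ha; exact ZMod.val_cast_of_lt (Finset.mem_range.mp ha)
  · intro a _; rfl

lemma gauss_bound (q : ℕ) (hq : 0 < q) (u : ℕ) (hu : Nat.Coprime u q) (n : ℤ) :
    ‖∑ x ∈ Finset.range q, Fq u q n (x : ℤ)‖ ≤ Real.sqrt (2 * q) := by
  haveI : NeZero q := ⟨hq.ne'⟩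
  set S := ∑ x ∈ Finset.range q, Fq u q n (x : ℤ) with hSdef
  have hSz : S = ∑ w : ZMod q, Fq u q n (w.val : ℤ) :=
    (sum_zmod_val q (fun i => Fq u q n (i : ℤ))).symm
  -- the key identity
  have inner : ∀ h : ZMod q,
      (∑ w : ZMod q, (starRingEnd ℂ) (Fq u q n (w.val : ℤ)) * Fq u q n (((w + h).val : ℤ)))
        = Fq u q n (h.val : ℤ) * (if (q : ℤ) ∣ (2 * u * h.val : ℤ) then (q : ℂ) else 0) := by
    intro h
    have step : ∀ w : ZMod q,
        (starRingEnd ℂ) (Fq u q n (w.val : ℤ)) * Fq u q n (((w + h).val : ℤ))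
          = Fq u q n (h.val : ℤ) * eC (((2 * u * h.val : ℤ) : ℝ) * ((w.val : ℕ) : ℝ) / q) := by
      intro w
      have hper : Fq u q n (((w + h).val : ℤ)) = Fq u q n ((w.val : ℤ) + (h.val : ℤ)) := by
        apply Fq_periodic u q hq n
        have hmod : (w + h).val = (w.val + h.val) % q := ZMod.val_add w h
        rw [hmod]
        have := (Nat.mod_modEq (w.val + h.val) q).dvd
        -- this : (q:ℤ) ∣ (w.val + h.val) - (w.val + h.val) % q
        have h2 : (((w.val + h.val) % q : ℕ) : ℤ) - ((w.val : ℤ) + (h.val : ℤ))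
            = -(((w.val + h.val : ℕ) : ℤ) - (((w.val + h.val) % q : ℕ) : ℤ)) := by push_cast; ring
        rw [h2]
        exact dvd_neg.mpr this
      rw [hper, mul_comm, Fq_mul_conj u q hq n]
      norm_cast
    rw [Finset.sum_congr rfl (fun w _ => step w), ← Finset.mul_sum]
    congr 1
    rw [sum_zmod_val q (fun i => eC (((2 * u * h.val : ℤ) : ℝ) * (i : ℝ) / q))]
    exact sum_eC_range q hq _
  have key : (starRingEnd ℂ) S * S
      = ∑ h : ZMod q, Fq u q n (h.val : ℤ)
          * (if (q : ℤ) ∣ (2 * u * h.val : ℤ) then (q : ℂ) else 0) := by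
    calc (starRingEnd ℂ) S * S
        = ∑ w : ZMod q, (starRingEnd ℂ) (Fq u q n (w.val : ℤ)) * S := by
          rw [hSz, map_sum, Finset.sum_mul]
      _ = ∑ w : ZMod q, ∑ h : ZMod q,
            (starRingEnd ℂ) (Fq u q n (w.val : ℤ)) * Fq u q n (((w + h).val : ℤ)) := by
          refine Finset.sum_congr rfl fun w _ => ?_
          rw [hSz]
          rw [← Equiv.sum_comp (Equiv.addLeft w) (fun z => Fq u q n (z.val : ℤ))]
          rw [Finset.mul_sum]
          rfl
      _ = ∑ h : ZMod q, ∑ w : ZMod q,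
            (starRingEnd ℂ) (Fq u q n (w.val : ℤ)) * Fq u q n (((w + h).val : ℤ)) :=
          Finset.sum_comm
      _ = _ := Finset.sum_congr rfl fun h _ => inner h
  -- counting
  have habs2 : ‖S‖ ^ 2 ≤ 2 * q := by
    have h1 : (‖S‖) ^ 2 = ‖(starRingEnd ℂ) S * S‖ := by
      rw [norm_mul, Complex.norm_conj, sq]
    rw [h1, key]
    refine le_trans (norm_sum_le _ _) ?_
    have hterm : ∀ h : ZMod q,
        ‖Fq u q n (h.val : ℤ)
            * (if (q : ℤ) ∣ (2 * u * h.val : ℤ) then (q : ℂ) else 0)‖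
          ≤ (if (q : ℤ) ∣ (2 * u * h.val : ℤ) then (q : ℝ) else 0) := by
      intro h
      rw [norm_mul, Fq, abs_eC, one_mul]
      split
      · rw [Complex.norm_natCast]
      · simp
    refine le_trans (Finset.sum_le_sum fun h _ => hterm h) ?_
    have hfilter : (∑ h : ZMod q, if (q : ℤ) ∣ (2 * u * h.val : ℤ) then (q : ℝ) else 0)
        = ((Finset.univ.filter
            (fun h : ZMod q => (q : ℤ) ∣ (2 * u * h.val : ℤ))).card : ℝ) * q := by
      rw [← Finset.sum_filter, Finset.sum_const, nsmul_eq_mul]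
    rw [hfilter]
    have hcard : (Finset.univ.filter
        (fun h : ZMod q => (q : ℤ) ∣ (2 * u * h.val : ℤ))).card ≤ 2 := by
      have hmap : ∀ h ∈ Finset.univ.filter (fun h : ZMod q => (q : ℤ) ∣ (2 * u * h.val : ℤ)),
          2 * h.val ∈ ({0, q} : Finset ℕ) := by
        intro h hh
        rw [Finset.mem_filter] at hh
        have hd : q ∣ 2 * u * h.val := by exact_mod_cast hh.2
        have hd2 : q ∣ 2 * h.val := by
          refine Nat.Coprime.dvd_of_dvd_mul_right hu.symm ?_
          convert hd using 1
          ring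
        have hlt : h.val < q := h.val_lt
        obtain ⟨k, hk⟩ := hd2
        have hklt : k < 2 := by
          by_contra hge
          push_neg at hge
          have : q * 2 ≤ q * k := Nat.mul_le_mul_left q hge
          omega
        simp only [Finset.mem_insert, Finset.mem_singleton]
        interval_cases k <;> omega
      have hinj : Set.InjOn (fun h : ZMod q => 2 * h.val)
          (Finset.univ.filter (fun h : ZMod q => (q : ℤ) ∣ (2 * u * h.val : ℤ))) := by
        intro a _ b _ hab
        simp only at hab
        have hv : a.val = b.val := by omega
        exact ZMod.val_injective q hv
      calc (Finset.univ.filter (fun h : ZMod q => (q : ℤ) ∣ (2 * u * h.val : ℤ))).card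
          ≤ ({0, q} : Finset ℕ).card := Finset.card_le_card_of_injOn _ hmap hinj
        _ ≤ 2 := le_trans (Finset.card_insert_le _ _) (by simp)
    have hc2 : ((Finset.univ.filter
        (fun h : ZMod q => (q : ℤ) ∣ (2 * u * h.val : ℤ))).card : ℝ) ≤ 2 := by
      exact_mod_cast hcard
    have hq0 : (0 : ℝ) ≤ q := Nat.cast_nonneg q
    nlinarith
  exact (Real.le_sqrt (norm_nonneg S) (by positivity)).mpr habs2

lemma inner_factor (d q : ℕ) (hq : 0 < q) (u : ℕ) (n : Fin d → ℤ) :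
    (∑ b : Fin d → Fin q,
      eC (((u : ℝ) * ∑ i, (((b i : ℕ) : ℝ)) ^ 2
            + ∑ i, ((b i : ℕ) : ℝ) * ((n i : ℝ))) / q))
    = ∏ i, ∑ x ∈ Finset.range q, Fq u q (n i) (x : ℤ) := by
  have hterm : ∀ b : Fin d → Fin q,
      eC (((u : ℝ) * ∑ i, (((b i : ℕ) : ℝ)) ^ 2 + ∑ i, ((b i : ℕ) : ℝ) * ((n i : ℝ))) / q)
        = ∏ i, Fq u q (n i) (((b i : ℕ) : ℤ)) := by
    intro b
    have harg : ((u : ℝ) * ∑ i, (((b i : ℕ) : ℝ)) ^ 2 + ∑ i, ((b i : ℕ) : ℝ) * ((n i : ℝ))) / q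
        = ∑ i, (((u : ℝ) * (((b i : ℕ) : ℝ)) ^ 2 + ((b i : ℕ) : ℝ) * ((n i : ℝ))) / q) := by
      rw [← Finset.sum_div]
      congr 1
      rw [Finset.mul_sum, ← Finset.sum_add_distrib]
    rw [harg, eC_sum]
    refine Finset.prod_congr rfl fun i _ => ?_
    rw [Fq]
    norm_cast
  calc (∑ b : Fin d → Fin q,
      eC (((u : ℝ) * ∑ i, (((b i : ℕ) : ℝ)) ^ 2 + ∑ i, ((b i : ℕ) : ℝ) * ((n i : ℝ))) / q))
      = ∑ b : Fin d → Fin q, ∏ i, Fq u q (n i) (((b i : ℕ) : ℤ)) :=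
        Finset.sum_congr rfl fun b _ => hterm b
    _ = ∏ i, ∑ x : Fin q, Fq u q (n i) (((x : ℕ) : ℤ)) := (Fintype.prod_sum (κ := fun _ : Fin d => Fin q)
          (fun i x => Fq u q (n i) (((x : ℕ) : ℤ)))).symm
    _ = ∏ i, ∑ x ∈ Finset.range q, Fq u q (n i) (x : ℤ) := by
        refine Finset.prod_congr rfl fun i _ => ?_
        exact Fin.sum_univ_eq_sum_range (fun x => Fq u q (n i) (x : ℤ)) q

theorem statement17 (d : ℕ) (hd : 1 ≤ d) (q : ℕ) (hq : 1 ≤ q) (N : ℤ) (n : Fin d → ℤ) :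
    ‖kloosterman d q N n‖
      ≤ (2 : ℝ) ^ ((d : ℝ) / 2) * (q : ℝ) ^ (1 - (d : ℝ) / 2) := by
  have hq0 : (0 : ℝ) < q := by exact_mod_cast hq
  have hbound : ∀ u : Fin q,
      ‖if Nat.Coprime (u : ℕ) q then
        eC (-(((u : ℕ) : ℝ) * (N : ℝ)) / q) *
          ∑ b : Fin d → Fin q,
            eC ((((u : ℕ) : ℝ) * ∑ i, (((b i : ℕ) : ℝ)) ^ 2
                + ∑ i, ((b i : ℕ) : ℝ) * ((n i : ℝ))) / q)
      else 0‖ ≤ Real.sqrt (2 * q) ^ d := by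
    intro u
    split
    · rename_i hc
      rw [norm_mul, abs_eC, one_mul, inner_factor d q hq (u : ℕ) n, norm_prod]
      calc ∏ i, ‖∑ x ∈ Finset.range q, Fq (u : ℕ) q (n i) (x : ℤ)‖
          ≤ ∏ _i : Fin d, Real.sqrt (2 * q) :=
            Finset.prod_le_prod (fun i _ => norm_nonneg _)
              (fun i _ => gauss_bound q hq (u : ℕ) hc (n i))
        _ = Real.sqrt (2 * q) ^ d := by
            rw [Finset.prod_const, Finset.card_univ, Fintype.card_fin]
    · simp only [norm_zero]
      positivity
  have hsum : ‖∑ u : Fin q,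
      if Nat.Coprime (u : ℕ) q then
        eC (-(((u : ℕ) : ℝ) * (N : ℝ)) / q) *
          ∑ b : Fin d → Fin q,
            eC ((((u : ℕ) : ℝ) * ∑ i, (((b i : ℕ) : ℝ)) ^ 2
                + ∑ i, ((b i : ℕ) : ℝ) * ((n i : ℝ))) / q)
      else 0‖ ≤ (q : ℝ) * Real.sqrt (2 * q) ^ d := by
    refine le_trans (norm_sum_le _ _) ?_
    refine le_trans (Finset.sum_le_sum fun u _ => hbound u) ?_
    rw [Finset.sum_const, Finset.card_univ, Fintype.card_fin, nsmul_eq_mul]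
  have h1 : Real.sqrt (2 * (q : ℝ)) ^ d = (2 * (q : ℝ)) ^ ((d : ℝ) / 2) := by
    rw [Real.sqrt_eq_rpow, ← Real.rpow_natCast ((2 * (q : ℝ)) ^ ((1 : ℝ) / 2)) d,
      ← Real.rpow_mul (by positivity)]
    congr 1
    ring
  have h2 : ((q : ℝ))⁻¹ ^ d = (q : ℝ) ^ (-(d : ℝ)) := by
    rw [← Real.rpow_natCast ((q : ℝ))⁻¹ d, Real.inv_rpow hq0.le, ← Real.rpow_neg hq0.le]
  have h3 : (q : ℝ) ^ (-(d : ℝ)) * ((q : ℝ) * ((2 : ℝ) ^ ((d : ℝ) / 2) * (q : ℝ) ^ ((d : ℝ) / 2)))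
      = 2 ^ ((d : ℝ) / 2) * (q : ℝ) ^ (1 - (d : ℝ) / 2) := by
    rw [show ((q : ℝ) ^ (-(d : ℝ)) * ((q : ℝ) * ((2 : ℝ) ^ ((d : ℝ) / 2) * (q : ℝ) ^ ((d : ℝ) / 2))))
        = (2 : ℝ) ^ ((d : ℝ) / 2) * (((q : ℝ) ^ (-(d : ℝ)) * (q : ℝ) ^ ((1 : ℝ))) * (q : ℝ) ^ ((d : ℝ) / 2))
      by rw [Real.rpow_one]; ring]
    rw [← Real.rpow_add hq0, ← Real.rpow_add hq0]
    congr 1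
    ring
  rw [kloosterman, norm_mul, norm_pow, norm_inv, Complex.norm_natCast]
  calc ((q : ℝ))⁻¹ ^ d * ‖∑ u : Fin q,
      if Nat.Coprime (u : ℕ) q then
        eC (-(((u : ℕ) : ℝ) * (N : ℝ)) / q) *
          ∑ b : Fin d → Fin q,
            eC ((((u : ℕ) : ℝ) * ∑ i, (((b i : ℕ) : ℝ)) ^ 2
                + ∑ i, ((b i : ℕ) : ℝ) * ((n i : ℝ))) / q)
      else 0‖
      ≤ ((q : ℝ))⁻¹ ^ d * ((q : ℝ) * Real.sqrt (2 * q) ^ d) :=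
        mul_le_mul_of_nonneg_left hsum (by positivity)
    _ = 2 ^ ((d : ℝ) / 2) * (q : ℝ) ^ (1 - (d : ℝ) / 2) := by
        rw [h1, Real.mul_rpow (by norm_num) hq0.le, h2, h3]


end
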